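/- (Suzuki induction step, from the proof of Theorem 4.2, in a Banach algebra.) Let A be a complete normed unital algebra over ℝ or ℂ, a ∈ A, and m ≥ 1, ℓ ≥ 1 integers, r = 2ℓ+1. Let s = 1/((r−1) − (r−1)^{1/(2m+1)}) and s̃ = 1 − (r−1)·s. Let f : ℝ → A be (2m+1)-times continuously differentiable with f(0) = 1, and suppose the derivatives of μ ↦ f(μ) − exp(μ·a) at μ = 0 vanish for every order j = 0, 1, …, 2m. Define g : ℝ → A by g(μ) = f(s·μ)^ℓ · f(s̃·μ) · f(s·μ)^ℓ. Then the derivatives of μ ↦ g(μ) − exp(μ·a) at μ = 0 vanish for every order j = 0, 1, …, 2m+1. -/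

import Mathlib

open NormedSpace

section SuzukiAux

variable {A : Type*} [NormedRing A] [NormedAlgebra ℝ A]

lemma suzuki_iteratedDeriv_add {n : ℕ} {F G : ℝ → A} (hF : ContDiff ℝ n F)
    (hG : ContDiff ℝ n G) (x : ℝ) :
    iteratedDeriv n (fun t => F t + G t) x = iteratedDeriv n F x + iteratedDeriv n G x := by
  rw [← iteratedDerivWithin_univ, ← iteratedDerivWithin_univ (f := F),
    ← iteratedDerivWithin_univ (f := G)]
  exact iteratedDerivWithin_add (Set.mem_univ x) uniqueDiffOn_univ hF.contDiffAt.contDiffWithinAt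
    hG.contDiffAt.contDiffWithinAt

lemma suzuki_jd_left :
    ∀ (n : ℕ) (w φ : ℝ → A), ContDiff ℝ n w → ContDiff ℝ n φ →
      (∀ j, j < n → iteratedDeriv j w 0 = 0) →
      iteratedDeriv n (fun x => w x * φ x) 0 = iteratedDeriv n w 0 * φ 0 := by
  intro n
  induction n with
  | zero => intro w φ _ _ _; simp [iteratedDeriv_zero]
  | succ n ih =>
    intro w φ hw hφ hvan
    have hw1 : Differentiable ℝ w :=
      hw.differentiable (by norm_num)
    have hφ1 : Differentiable ℝ φ :=
      hφ.differentiable (by norm_num)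
    have hwd : ContDiff ℝ n (deriv w) :=
      (contDiff_succ_iff_deriv.mp (by exact_mod_cast hw)).2.2
    have hφd : ContDiff ℝ n (deriv φ) :=
      (contDiff_succ_iff_deriv.mp (by exact_mod_cast hφ)).2.2
    have hwn : ContDiff ℝ n w := hw.of_le (by exact_mod_cast Nat.le_succ n)
    have hφn : ContDiff ℝ n φ := hφ.of_le (by exact_mod_cast Nat.le_succ n)
    rw [iteratedDeriv_succ']
    rw [show deriv (fun x => w x * φ x) = fun x => deriv w x * φ x + w x * deriv φ x from
      funext fun x => deriv_mul (hw1 x) (hφ1 x)]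
    rw [suzuki_iteratedDeriv_add (hwd.mul hφn) (hwn.mul hφd) 0]
    rw [ih (deriv w) φ hwd hφn (fun j hj => by
      have h := hvan (j + 1) (Nat.succ_lt_succ hj)
      rwa [iteratedDeriv_succ'] at h)]
    rw [ih w (deriv φ) hwn hφd (fun j hj => hvan j (hj.trans n.lt_succ_self))]
    rw [hvan n n.lt_succ_self, zero_mul, add_zero, ← iteratedDeriv_succ']

lemma suzuki_jd_right :
    ∀ (n : ℕ) (w φ : ℝ → A), ContDiff ℝ n w → ContDiff ℝ n φ →
      (∀ j, j < n → iteratedDeriv j w 0 = 0) →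
      iteratedDeriv n (fun x => φ x * w x) 0 = φ 0 * iteratedDeriv n w 0 := by
  intro n
  induction n with
  | zero => intro w φ _ _ _; simp [iteratedDeriv_zero]
  | succ n ih =>
    intro w φ hw hφ hvan
    have hw1 : Differentiable ℝ w :=
      hw.differentiable (by norm_num)
    have hφ1 : Differentiable ℝ φ :=
      hφ.differentiable (by norm_num)
    have hwd : ContDiff ℝ n (deriv w) :=
      (contDiff_succ_iff_deriv.mp (by exact_mod_cast hw)).2.2
    have hφd : ContDiff ℝ n (deriv φ) :=
      (contDiff_succ_iff_deriv.mp (by exact_mod_cast hφ)).2.2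
    have hwn : ContDiff ℝ n w := hw.of_le (by exact_mod_cast Nat.le_succ n)
    have hφn : ContDiff ℝ n φ := hφ.of_le (by exact_mod_cast Nat.le_succ n)
    rw [iteratedDeriv_succ']
    rw [show deriv (fun x => φ x * w x) = fun x => deriv φ x * w x + φ x * deriv w x from
      funext fun x => deriv_mul (hφ1 x) (hw1 x)]
    rw [suzuki_iteratedDeriv_add (hφd.mul hwn) (hφn.mul hwd) 0]
    rw [ih w (deriv φ) hwn hφd (fun j hj => hvan j (hj.trans n.lt_succ_self))]
    rw [ih (deriv w) φ hwd hφn (fun j hj => by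
      have h := hvan (j + 1) (Nat.succ_lt_succ hj)
      rwa [iteratedDeriv_succ'] at h)]
    rw [hvan n n.lt_succ_self, mul_zero, zero_add, ← iteratedDeriv_succ']

lemma suzuki_jd_mul (n : ℕ) (u v u' v' : ℝ → A)
    (hu : ContDiff ℝ n u) (hv : ContDiff ℝ n v)
    (hu' : ContDiff ℝ n u') (hv' : ContDiff ℝ n v')
    (hjet : ∀ j, j < n → iteratedDeriv j (fun x => u x - v x) 0 = 0)
    (hjet' : ∀ j, j < n → iteratedDeriv j (fun x => u' x - v' x) 0 = 0) :
    ∀ j, j ≤ n →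
      iteratedDeriv j (fun x => u x * u' x - v x * v' x) 0 =
        iteratedDeriv j (fun x => u x - v x) 0 * u' 0 +
          v 0 * iteratedDeriv j (fun x => u' x - v' x) 0 := by
  intro j hj
  have hle : (j : WithTop ℕ∞) ≤ n := by exact_mod_cast hj
  have huj := hu.of_le hle
  have hvj := hv.of_le hle
  have huj' := hu'.of_le hle
  have hvj' := hv'.of_le hle
  have hsplit : (fun x => u x * u' x - v x * v' x) =
      fun x => (u x - v x) * u' x + v x * (u' x - v' x) := by
    funext x; rw [sub_mul, mul_sub]; abel
  rw [hsplit]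
  rw [suzuki_iteratedDeriv_add ((huj.sub hvj).mul huj') (hvj.mul (huj'.sub hvj')) 0]
  rw [suzuki_jd_left j (fun x => u x - v x) u' (huj.sub hvj) huj'
    (fun i hi => hjet i (lt_of_lt_of_le hi hj))]
  rw [suzuki_jd_right j (fun x => u' x - v' x) v (huj'.sub hvj') hvj
    (fun i hi => hjet' i (lt_of_lt_of_le hi hj))]

lemma suzuki_Qmul (n : ℕ) (hn : 0 < n) (D : A) (u v u' v' : ℝ → A) (c c' : ℝ)
    (hu : ContDiff ℝ n u) (hv : ContDiff ℝ n v)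
    (hu' : ContDiff ℝ n u') (hv' : ContDiff ℝ n v')
    (hv0 : v 0 = 1) (hv'0 : v' 0 = 1)
    (hjet : ∀ j, j < n → iteratedDeriv j (fun x => u x - v x) 0 = 0)
    (htop : iteratedDeriv n (fun x => u x - v x) 0 = c • D)
    (hjet' : ∀ j, j < n → iteratedDeriv j (fun x => u' x - v' x) 0 = 0)
    (htop' : iteratedDeriv n (fun x => u' x - v' x) 0 = c' • D) :
    (∀ j, j < n → iteratedDeriv j (fun x => u x * u' x - v x * v' x) 0 = 0) ∧
      iteratedDeriv n (fun x => u x * u' x - v x * v' x) 0 = (c + c') • D := by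
  have hu'0 : u' 0 = 1 := by
    have h0 := hjet' 0 hn
    rw [iteratedDeriv_zero] at h0
    have h1 : u' 0 - v' 0 = 0 := h0
    rw [hv'0] at h1
    exact sub_eq_zero.mp h1
  constructor
  · intro j hj
    rw [suzuki_jd_mul n u v u' v' hu hv hu' hv' hjet hjet' j hj.le,
      hjet j hj, hjet' j hj, zero_mul, mul_zero, add_zero]
  · rw [suzuki_jd_mul n u v u' v' hu hv hu' hv' hjet hjet' n le_rfl,
      htop, htop', hu'0, hv0, mul_one, one_mul, ← add_smul]

lemma suzuki_contDiff_exp_smul [CompleteSpace A] (a : A) (n : ℕ) :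
    ContDiff ℝ n (fun μ : ℝ => NormedSpace.exp (μ • a)) := by
  have h1 : ContDiff ℝ n (fun μ : ℝ => μ • a) := contDiff_id.smul contDiff_const
  have h2 : ContDiff ℝ n (NormedSpace.exp : A → A) := by
    rw [contDiff_iff_contDiffAt]
    intro x
    exact (NormedSpace.exp_analytic x).contDiffAt
  exact h2.comp h1

lemma suzuki_Qpow (n : ℕ) (hn : 0 < n) (D : A) (u v : ℝ → A) (c : ℝ)
    (hu : ContDiff ℝ n u) (hv : ContDiff ℝ n v) (hv0 : v 0 = 1)
    (hjet : ∀ j, j < n → iteratedDeriv j (fun x => u x - v x) 0 = 0)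
    (htop : iteratedDeriv n (fun x => u x - v x) 0 = c • D) :
    ∀ k : ℕ,
      (∀ j, j < n → iteratedDeriv j (fun x => u x ^ k - v x ^ k) 0 = 0) ∧
        iteratedDeriv n (fun x => u x ^ k - v x ^ k) 0 = ((k : ℝ) * c) • D := by
  intro k
  induction k with
  | zero =>
    have hz : (fun x : ℝ => u x ^ 0 - v x ^ 0) = fun _ : ℝ => (0 : A) := by
      funext x; simp
    rw [hz]
    constructor
    · intro j _
      rw [iteratedDeriv_eq_iteratedFDeriv, iteratedFDeriv_zero_fun]
      simp
    · rw [iteratedDeriv_eq_iteratedFDeriv, iteratedFDeriv_zero_fun]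
      simp
  | succ k ih =>
    have hQ := suzuki_Qmul n hn D (fun x => u x ^ k) (fun x => v x ^ k) u v
      ((k : ℝ) * c) c (hu.pow k) (hv.pow k) hu hv (by simp [hv0]) hv0
      ih.1 ih.2 hjet htop
    have he : (fun x => u x ^ (k + 1) - v x ^ (k + 1)) =
        fun x => u x ^ k * u x - v x ^ k * v x := by
      funext x; rw [pow_succ, pow_succ]
    rw [he]
    refine ⟨hQ.1, ?_⟩
    rw [hQ.2]
    congr 1
    push_cast
    ring

/-- Abstract form of the induction step, with general coefficients `s`, `t`. -/
lemma suzuki_main_aux [CompleteSpace A] (a : A) (n : ℕ) (hn : 0 < n) (ℓ : ℕ)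
    (f : ℝ → A) (hf : ContDiff ℝ n f)
    (hlow : ∀ j, j < n → iteratedDeriv j (fun μ : ℝ => f μ - exp (μ • a)) 0 = 0)
    (s t : ℝ)
    (hsum : (ℓ : ℝ) * s + t + (ℓ : ℝ) * s = 1)
    (hcoef : (ℓ : ℝ) * s ^ n + t ^ n + (ℓ : ℝ) * s ^ n = 0) :
    ∀ j, j ≤ n →
      iteratedDeriv j
        (fun μ : ℝ => f (s * μ) ^ ℓ * f (t * μ) * f (s * μ) ^ ℓ - exp (μ • a)) 0 = 0 := by
  set D : A := iteratedDeriv n (fun μ : ℝ => f μ - exp (μ • a)) 0 with hD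
  -- scaled base facts
  have base : ∀ r : ℝ,
      (∀ j, j < n →
          iteratedDeriv j (fun μ : ℝ => f (r * μ) - exp ((r * μ) • a)) 0 = 0) ∧
        iteratedDeriv n (fun μ : ℝ => f (r * μ) - exp ((r * μ) • a)) 0 = r ^ n • D := by
    intro r
    have hh : ∀ k : ℕ, k ≤ n → ContDiff ℝ k (fun μ : ℝ => f μ - exp (μ • a)) := fun k hk =>
      (hf.of_le (by exact_mod_cast hk)).sub (suzuki_contDiff_exp_smul a k)
    have hscale : ∀ k : ℕ, k ≤ n →
        iteratedDeriv k (fun μ : ℝ => f (r * μ) - exp ((r * μ) • a)) 0 =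
          r ^ k • iteratedDeriv k (fun μ : ℝ => f μ - exp (μ • a)) 0 := by
      intro k hk
      have h := iteratedDeriv_comp_const_smul (hh k hk) r
      have h0 := congrFun h 0
      rw [mul_zero] at h0
      exact h0
    refine ⟨fun j hj => ?_, hscale n le_rfl⟩
    rw [hscale j hj.le, hlow j hj, smul_zero]
  have hCu : ∀ r : ℝ, ContDiff ℝ n (fun μ : ℝ => f (r * μ)) := fun r =>
    hf.comp (contDiff_const.mul contDiff_id)
  have hCv : ∀ r : ℝ, ContDiff ℝ n (fun μ : ℝ => exp ((r * μ) • a)) := fun r =>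
    (suzuki_contDiff_exp_smul a n).comp (contDiff_const.mul contDiff_id)
  have hv0 : ∀ r : ℝ, (fun μ : ℝ => exp ((r * μ) • a)) 0 = 1 := by
    intro r
    simp [NormedSpace.exp_zero]
  have Qpow1 := suzuki_Qpow n hn D (fun μ : ℝ => f (s * μ))
    (fun μ : ℝ => exp ((s * μ) • a)) (s ^ n) (hCu s) (hCv s) (hv0 s)
    (base s).1 (base s).2 ℓ
  have Q2 := suzuki_Qmul n hn D (fun μ : ℝ => f (s * μ) ^ ℓ)
    (fun μ : ℝ => exp ((s * μ) • a) ^ ℓ) (fun μ : ℝ => f (t * μ))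
    (fun μ : ℝ => exp ((t * μ) • a)) ((ℓ : ℝ) * s ^ n) (t ^ n)
    ((hCu s).pow ℓ) ((hCv s).pow ℓ) (hCu t) (hCv t)
    (by simp [NormedSpace.exp_zero]) (hv0 t) Qpow1.1 Qpow1.2 (base t).1 (base t).2
  have Q3 := suzuki_Qmul n hn D (fun μ : ℝ => f (s * μ) ^ ℓ * f (t * μ))
    (fun μ : ℝ => exp ((s * μ) • a) ^ ℓ * exp ((t * μ) • a))
    (fun μ : ℝ => f (s * μ) ^ ℓ) (fun μ : ℝ => exp ((s * μ) • a) ^ ℓ)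
    ((ℓ : ℝ) * s ^ n + t ^ n) ((ℓ : ℝ) * s ^ n)
    (((hCu s).pow ℓ).mul (hCu t)) (((hCv s).pow ℓ).mul (hCv t))
    ((hCu s).pow ℓ) ((hCv s).pow ℓ)
    (by simp [NormedSpace.exp_zero]) (by simp [NormedSpace.exp_zero])
    Q2.1 Q2.2 Qpow1.1 Qpow1.2
  -- the exponential side collapses
  have hcomm : ∀ p q : ℝ, Commute (p • a) (q • a) := fun p q =>
    ((Commute.refl a).smul_left p).smul_right q
  have hVE : ∀ μ : ℝ,
      exp ((s * μ) • a) ^ ℓ * exp ((t * μ) • a) * exp ((s * μ) • a) ^ ℓ =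
        exp (μ • a) := by
    intro μ
    letI : NormedAlgebra ℚ A := NormedAlgebra.restrictScalars ℚ ℝ A
    have hps : exp ((s * μ) • a) ^ ℓ = exp (((ℓ : ℝ) * (s * μ)) • a) := by
      rw [← NormedSpace.exp_nsmul, (Nat.cast_smul_eq_nsmul ℝ ℓ _).symm, smul_smul]
    rw [hps, ← NormedSpace.exp_add_of_commute (hcomm _ _), ← add_smul,
      ← NormedSpace.exp_add_of_commute (hcomm _ _), ← add_smul]
    congr 1
    have : (ℓ : ℝ) * (s * μ) + t * μ + (ℓ : ℝ) * (s * μ) =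
        ((ℓ : ℝ) * s + t + (ℓ : ℝ) * s) * μ := by ring
    rw [this, hsum, one_mul]
  have hfix : (fun μ : ℝ => f (s * μ) ^ ℓ * f (t * μ) * f (s * μ) ^ ℓ - exp (μ • a)) =
      fun x : ℝ => (fun μ : ℝ => f (s * μ) ^ ℓ * f (t * μ)) x * (fun μ : ℝ => f (s * μ) ^ ℓ) x -
        (fun μ : ℝ => exp ((s * μ) • a) ^ ℓ * exp ((t * μ) • a)) x *
          (fun μ : ℝ => exp ((s * μ) • a) ^ ℓ) x := by
    funext x
    show f (s * x) ^ ℓ * f (t * x) * f (s * x) ^ ℓ - exp (x • a) =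
      f (s * x) ^ ℓ * f (t * x) * f (s * x) ^ ℓ -
        exp ((s * x) • a) ^ ℓ * exp ((t * x) • a) * exp ((s * x) • a) ^ ℓ
    rw [hVE x]
  intro j hj
  rw [hfix]
  rcases hj.lt_or_eq with hlt | rfl
  · exact Q3.1 j hlt
  · rw [Q3.2, hcoef, zero_smul]

end SuzukiAux

/-- The Suzuki coefficient `s_m = 1 / ((r-1) - (r-1)^(1/(2m+1)))`. -/
noncomputable def suzukiS (r m : ℕ) : ℝ :=
  1 / (((r : ℝ) - 1) - ((r : ℝ) - 1) ^ ((1 : ℝ) / (2 * (m : ℝ) + 1)))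

lemma suzuki_coeff_zero (m ℓ : ℕ) (hm : 1 ≤ m) (hℓ : 1 ≤ ℓ) :
    (ℓ : ℝ) * suzukiS (2 * ℓ + 1) m ^ (2 * m + 1) +
        (1 - (((2 * ℓ + 1 : ℕ) : ℝ) - 1) * suzukiS (2 * ℓ + 1) m) ^ (2 * m + 1) +
      (ℓ : ℝ) * suzukiS (2 * ℓ + 1) m ^ (2 * m + 1) = 0 := by
  have hc : ((2 * ℓ + 1 : ℕ) : ℝ) - 1 = 2 * (ℓ : ℝ) := by push_cast; ring
  have hℓ1 : (1 : ℝ) ≤ (ℓ : ℝ) := by exact_mod_cast hℓ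
  have hb : (1 : ℝ) < 2 * (ℓ : ℝ) := by linarith
  have hm1 : (1 : ℝ) ≤ (m : ℝ) := by exact_mod_cast hm
  set x : ℝ := (2 * (ℓ : ℝ)) ^ ((1 : ℝ) / (2 * (m : ℝ) + 1)) with hxdef
  have hexp_lt : (1 : ℝ) / (2 * (m : ℝ) + 1) < 1 := by
    rw [div_lt_one (by linarith)]; linarith
  have hxb : x < 2 * (ℓ : ℝ) := by
    have h := Real.rpow_lt_rpow_of_exponent_lt hb hexp_lt
    rwa [Real.rpow_one] at h
  have hd : 2 * (ℓ : ℝ) - x ≠ 0 := sub_ne_zero.mpr (ne_of_gt hxb)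
  have hxpow : x ^ (2 * m + 1) = 2 * (ℓ : ℝ) := by
    rw [hxdef, ← Real.rpow_natCast ((2 * (ℓ : ℝ)) ^ ((1 : ℝ) / (2 * (m : ℝ) + 1))) (2 * m + 1),
      ← Real.rpow_mul (by linarith)]
    rw [show (1 : ℝ) / (2 * (m : ℝ) + 1) * ((2 * m + 1 : ℕ) : ℝ) = 1 by
      push_cast
      field_simp]
    exact Real.rpow_one _
  have hs : suzukiS (2 * ℓ + 1) m = 1 / (2 * (ℓ : ℝ) - x) := by
    rw [suzukiS, hc, ← hxdef]
  rw [hc, hs]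
  have ht : 1 - 2 * (ℓ : ℝ) * (1 / (2 * (ℓ : ℝ) - x)) = -(x / (2 * (ℓ : ℝ) - x)) := by
    field_simp
    ring
  have hodd : Odd (2 * m + 1) := ⟨m, by ring⟩
  rw [ht, hodd.neg_pow, div_pow, div_pow, hxpow, one_pow]
  have hdn : (2 * (ℓ : ℝ) - x) ^ (2 * m + 1) ≠ 0 := pow_ne_zero _ hd
  field_simp
  ring

/-- Suzuki induction step (from the proof of Theorem 4.2), in a complete normed unital
algebra: if `f` is `(2m+1)`-times continuously differentiable, `f 0 = 1`, and
`μ ↦ f μ - exp (μ a)` has vanishing derivatives at `0` up to order `2m`, then with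
`r = 2ℓ+1`, `s = s_m` and `s̃ = 1 - (r-1) s`, the Suzuki composition
`g(μ) = f(sμ)^ℓ · f(s̃μ) · f(sμ)^ℓ` satisfies: `μ ↦ g μ - exp (μ a)` has vanishing
derivatives at `0` up to order `2m+1`. -/
theorem suzuki_induction_step {A : Type*} [NormedRing A] [NormedAlgebra ℝ A]
    [CompleteSpace A] (a : A) (m ℓ : ℕ) (hm : 1 ≤ m) (hℓ : 1 ≤ ℓ)
    (f : ℝ → A) (hf : ContDiff ℝ (2 * m + 1 : ℕ) f) (hf0 : f 0 = 1)
    (hlow : ∀ j : ℕ, j ≤ 2 * m →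
      iteratedDeriv j (fun μ : ℝ => f μ - NormedSpace.exp (μ • a)) 0 = 0) :
    ∀ j : ℕ, j ≤ 2 * m + 1 →
      iteratedDeriv j
        (fun μ : ℝ =>
          f (suzukiS (2 * ℓ + 1) m * μ) ^ ℓ *
            f ((1 - (((2 * ℓ + 1 : ℕ) : ℝ) - 1) * suzukiS (2 * ℓ + 1) m) * μ) *
            f (suzukiS (2 * ℓ + 1) m * μ) ^ ℓ -
          NormedSpace.exp (μ • a)) 0 = 0 := by
  have hc : ((2 * ℓ + 1 : ℕ) : ℝ) - 1 = 2 * (ℓ : ℝ) := by push_cast; ring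
  exact suzuki_main_aux a (2 * m + 1) (Nat.succ_pos _) ℓ f hf
    (fun j hj => hlow j (by omega))
    (suzukiS (2 * ℓ + 1) m)
    (1 - (((2 * ℓ + 1 : ℕ) : ℝ) - 1) * suzukiS (2 * ℓ + 1) m)
    (by rw [hc]; ring)
    (suzuki_coeff_zero m ℓ hm hℓ)
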